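/- Let f : ℝⁿ × ℝᵐ → ℝ satisfy (A2): f is twice continuously differentiable and ∇²f ⪰ δ I_{n+m} everywhere for some δ > 0. Let A₁₁ ∈ ℝ^{k×k}, B₁ ∈ ℝ^{k×m} with (A₁₁,B₁) controllable (im(B₁, A₁₁B₁, …, A₁₁^{k−1}B₁) = ℝᵏ), let P₁ ∈ ℝ^{n×k} have orthonormal columns and P₂ ∈ ℝ^{n×(n−k)}, and fix y₂* ∈ ℝ^{n−k}. Define g : ℝᵏ × ℝᵐ × ℝᵏ → ℝᵏ × ℝᵐ × ℝᵏ by g(z,u,ν) = (P₁ᵀ f_x(P₁ z + P₂ y₂*, u) + A₁₁ᵀ ν, f_u(P₁ z + P₂ y₂*, u) + B₁ᵀ ν, A₁₁ z + B₁ u). Then g is coercive: |g(z,u,ν)| → ∞ as |(z,u,ν)| → ∞. -/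

import Mathlib

open MeasureTheory Matrix Filter

namespace Turnpike

/-- Euclidean norm of a real vector. -/
noncomputable def vnorm {n : ℕ} (x : Fin n → ℝ) : ℝ := Real.sqrt (∑ i, (x i) ^ 2)

/-- Frobenius norm of a real matrix. -/
noncomputable def mnorm {n m : ℕ} (M : Matrix (Fin n) (Fin m) ℝ) : ℝ :=
  Real.sqrt (∑ i, ∑ j, (M i j) ^ 2)

/-- Euclidean norm of a complex vector. -/
noncomputable def cnorm {d : ℕ} (w : Fin d → ℂ) : ℝ := Real.sqrt (∑ i, ‖w i‖ ^ 2)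

/-- The state trajectory `X(t) = e^{tA} x + ∫₀ᵗ e^{(t-s)A} (B u(s) + b) ds`. -/
noncomputable def traj {n m : ℕ} (A : Matrix (Fin n) (Fin n) ℝ) (B : Matrix (Fin n) (Fin m) ℝ)
    (b x : Fin n → ℝ) (u : ℝ → Fin m → ℝ) (t : ℝ) : Fin n → ℝ :=
  (NormedSpace.exp (t • A)).mulVec x +
    ∫ s in (0:ℝ)..t, (NormedSpace.exp ((t - s) • A)).mulVec (B.mulVec (u s) + b)

/-- `u ∈ L²(0,T;ℝᵐ)`. -/
def IsL2 {m : ℕ} (T : ℝ) (u : ℝ → Fin m → ℝ) : Prop :=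
  MemLp u 2 (volume.restrict (Set.Ioc 0 T))

/-- The cost functional `J_T(x;u) = ∫₀ᵀ f(X(t),u(t)) dt`. -/
noncomputable def cost {n m : ℕ} (A : Matrix (Fin n) (Fin n) ℝ) (B : Matrix (Fin n) (Fin m) ℝ)
    (b : Fin n → ℝ) (f : (Fin n → ℝ) → (Fin m → ℝ) → ℝ) (T : ℝ) (x : Fin n → ℝ)
    (u : ℝ → Fin m → ℝ) : ℝ :=
  ∫ t in (0:ℝ)..T, f (traj A B b x u t) (u t)

/-- `u` is an optimal control for Problem (LC)_T with initial state `x`. -/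
def OptimalControl {n m : ℕ} (A : Matrix (Fin n) (Fin n) ℝ) (B : Matrix (Fin n) (Fin m) ℝ)
    (b : Fin n → ℝ) (f : (Fin n → ℝ) → (Fin m → ℝ) → ℝ) (T : ℝ) (x : Fin n → ℝ)
    (u : ℝ → Fin m → ℝ) : Prop :=
  IsL2 T u ∧ ∀ v : ℝ → Fin m → ℝ, IsL2 T v → cost A B b f T x u ≤ cost A B b f T x v

/-- Kalman rank condition for controllability of `(A,B)`. -/
def Controllable {k m : ℕ} (A : Matrix (Fin k) (Fin k) ℝ) (B : Matrix (Fin k) (Fin m) ℝ) : Prop :=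
  ∀ v : Fin k → ℝ, (∀ i : ℕ, i < k → Matrix.vecMul v (A ^ i * B) = 0) → v = 0

/-- Observability of the pair `(A,C)`. -/
def Observable {n : ℕ} (A C : Matrix (Fin n) (Fin n) ℝ) : Prop :=
  ∀ v : Fin n → ℝ, (∀ i : ℕ, i < n → (C * A ^ i).mulVec v = 0) → v = 0

/-- A Kalman controllable decomposition of `(A,B)` given by `P₁, P₂` with `P = (P₁,P₂)`
orthogonal, columns of `P₁` spanning the controllable subspace. -/
structure KalmanDec (n k l m : ℕ) (A : Matrix (Fin n) (Fin n) ℝ) (B : Matrix (Fin n) (Fin m) ℝ)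
    (P₁ : Matrix (Fin n) (Fin k) ℝ) (P₂ : Matrix (Fin n) (Fin l) ℝ) : Prop where
  orth₁ : P₁ᵀ * P₁ = 1
  orth₂ : P₂ᵀ * P₂ = 1
  orth₁₂ : P₁ᵀ * P₂ = 0
  complete : P₁ * P₁ᵀ + P₂ * P₂ᵀ = 1
  lowerZero : P₂ᵀ * A * P₁ = 0
  inputZero : P₂ᵀ * B = 0
  ctrb : Controllable (P₁ᵀ * A * P₁) (P₁ᵀ * B)

/-- `𝒢₁`: real vectors lying in the sum of the generalized eigenspaces of `A₂₂` associated
with eigenvalues of negative real part. -/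
noncomputable def G1 {l : ℕ} (A22 : Matrix (Fin l) (Fin l) ℝ) : Set (Fin l → ℝ) :=
  {y | (fun i => (y i : ℂ)) ∈ Submodule.span ℂ
      {w : Fin l → ℂ | ∃ μ : ℂ, μ.re < 0 ∧
        ((A22.map (Complex.ofReal) - μ • 1) ^ l).mulVec w = 0}}

/-- `𝒢₂ = ker A₂₂`. -/
def G2 {l : ℕ} (A22 : Matrix (Fin l) (Fin l) ℝ) : Set (Fin l → ℝ) := {y | A22.mulVec y = 0}

/-- `w ∈ 𝒢₁ ⊕ 𝒢₂`. -/
def Feas {l : ℕ} (A22 : Matrix (Fin l) (Fin l) ℝ) (w : Fin l → ℝ) : Prop :=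
  ∃ y₁ ∈ G1 A22, ∃ y₂ ∈ G2 A22, w = y₁ + y₂

/-- `IsQ2 A22 w y₂` says `y₂ = Q₂ w`: `y₂ ∈ 𝒢₂` and `w - y₂ ∈ 𝒢₁`
(in particular `w ∈ 𝒢₁ ⊕ 𝒢₂`). -/
def IsQ2 {l : ℕ} (A22 : Matrix (Fin l) (Fin l) ℝ) (w y₂ : Fin l → ℝ) : Prop :=
  y₂ ∈ G2 A22 ∧ w - y₂ ∈ G1 A22

/-- Membership `(z,u) ∈ 𝒱ₓ`. -/
def InV {n m l : ℕ} (A : Matrix (Fin n) (Fin n) ℝ) (B : Matrix (Fin n) (Fin m) ℝ)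
    (b : Fin n → ℝ) (P₂ : Matrix (Fin n) (Fin l) ℝ) (c : Fin l → ℝ) (x : Fin n → ℝ)
    (z : Fin n → ℝ) (u : Fin m → ℝ) : Prop :=
  A.mulVec z + B.mulVec u + b = 0 ∧
  IsQ2 (P₂ᵀ * A * P₂) (P₂ᵀ.mulVec x + c) (P₂ᵀ.mulVec z + c)

/-- Partial gradient `f_x`. -/
noncomputable def gradX {n m : ℕ} (f : (Fin n → ℝ) → (Fin m → ℝ) → ℝ)
    (x : Fin n → ℝ) (u : Fin m → ℝ) : Fin n → ℝ :=
  fun i => deriv (fun s : ℝ => f (x + s • (Pi.single i 1 : Fin n → ℝ)) u) 0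

/-- Partial gradient `f_u`. -/
noncomputable def gradU {n m : ℕ} (f : (Fin n → ℝ) → (Fin m → ℝ) → ℝ)
    (x : Fin n → ℝ) (u : Fin m → ℝ) : Fin m → ℝ :=
  fun j => deriv (fun s : ℝ => f x (u + s • (Pi.single j 1 : Fin m → ℝ))) 0

/-- Full Hessian matrix `∇²f(x,u)` on `ℝⁿ × ℝᵐ`, indexed by `Fin n ⊕ Fin m`. -/
noncomputable def hessMat {n m : ℕ} (f : (Fin n → ℝ) → (Fin m → ℝ) → ℝ)
    (x : Fin n → ℝ) (u : Fin m → ℝ) : Matrix (Fin n ⊕ Fin m) (Fin n ⊕ Fin m) ℝ :=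
  fun i j => deriv (fun s : ℝ => deriv (fun r : ℝ =>
      f (fun a => (Sum.elim x u + s • (Pi.single i 1 : Fin n ⊕ Fin m → ℝ) + r • (Pi.single j 1 : Fin n ⊕ Fin m → ℝ)) (Sum.inl a))
        (fun a => (Sum.elim x u + s • (Pi.single i 1 : Fin n ⊕ Fin m → ℝ) + r • (Pi.single j 1 : Fin n ⊕ Fin m → ℝ)) (Sum.inr a))) 0) 0

/-- Assumption (A2): `f` is `C²` and `∇²f ⪰ δ I` everywhere. -/
def A2Hyp {n m : ℕ} (f : (Fin n → ℝ) → (Fin m → ℝ) → ℝ) (δ : ℝ) : Prop :=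
  ContDiff ℝ 2 (fun p : (Fin n → ℝ) × (Fin m → ℝ) => f p.1 p.2) ∧
  ∀ (x : Fin n → ℝ) (u : Fin m → ℝ),
    (hessMat f x u - δ • (1 : Matrix (Fin n ⊕ Fin m) (Fin n ⊕ Fin m) ℝ)).PosSemidef

/-- Second partial derivative matrix `f_{xu}(x,u) ∈ ℝ^{n×m}`. -/
noncomputable def fxuMat {n m : ℕ} (f : (Fin n → ℝ) → (Fin m → ℝ) → ℝ)
    (x : Fin n → ℝ) (u : Fin m → ℝ) : Matrix (Fin n) (Fin m) ℝ :=
  fun i j => deriv (fun s : ℝ => gradU f (x + s • (Pi.single i 1 : Fin n → ℝ)) u j) 0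

/-- Second partial derivative matrix `f_{uu}(x,u) ∈ ℝ^{m×m}`. -/
noncomputable def fuuMat {n m : ℕ} (f : (Fin n → ℝ) → (Fin m → ℝ) → ℝ)
    (x : Fin n → ℝ) (u : Fin m → ℝ) : Matrix (Fin m) (Fin m) ℝ :=
  fun i j => deriv (fun s : ℝ => gradU f x (u + s • (Pi.single i 1 : Fin m → ℝ)) j) 0

/-- Assumption (A3). -/
def A3Hyp {n m : ℕ} (f : (Fin n → ℝ) → (Fin m → ℝ) → ℝ) : Prop :=
  ∀ r > (0:ℝ), ∃ γ > (0:ℝ), ∀ (x : Fin n → ℝ) (u : Fin m → ℝ), vnorm x ≤ r →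
    mnorm (fxuMat f x u * (fuuMat f x u)⁻¹) ≤ γ

/-- Value function of Problem (LC)_T. -/
noncomputable def VT {n m : ℕ} (A : Matrix (Fin n) (Fin n) ℝ) (B : Matrix (Fin n) (Fin m) ℝ)
    (b : Fin n → ℝ) (f : (Fin n → ℝ) → (Fin m → ℝ) → ℝ) (T : ℝ) (x : Fin n → ℝ) : ℝ :=
  sInf {r | ∃ u : ℝ → Fin m → ℝ, IsL2 T u ∧ r = cost A B b f T x u}

/-- Optimal value of the static Problem (O). -/
noncomputable def Vstar {n m l : ℕ} (A : Matrix (Fin n) (Fin n) ℝ)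
    (B : Matrix (Fin n) (Fin m) ℝ) (b : Fin n → ℝ) (P₂ : Matrix (Fin n) (Fin l) ℝ)
    (c : Fin l → ℝ) (f : (Fin n → ℝ) → (Fin m → ℝ) → ℝ) (x : Fin n → ℝ) : ℝ :=
  sInf {r | ∃ z u, InV A B b P₂ c x z u ∧ r = f z u}

/-- The matrix `Π(s) = ∫₀¹ (1-θ) ∇²f((1-θ)x* + θX(s), (1-θ)u* + θu(s)) dθ`, entrywise. -/
noncomputable def PiMat {n m : ℕ} (f : (Fin n → ℝ) → (Fin m → ℝ) → ℝ)
    (xs : Fin n → ℝ) (us : Fin m → ℝ) (X : ℝ → Fin n → ℝ) (u : ℝ → Fin m → ℝ)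
    (s : ℝ) : Matrix (Fin n ⊕ Fin m) (Fin n ⊕ Fin m) ℝ :=
  fun i j => ∫ θ in (0:ℝ)..1,
    (1 - θ) * hessMat f ((1 - θ) • xs + θ • X s) ((1 - θ) • us + θ • u s) i j

section AuxCalc

open scoped RealInnerProductSpace

set_option linter.unusedSectionVars false

variable {ι : Type*} [Fintype ι] [DecidableEq ι]

noncomputable def pgrad (F : (ι → ℝ) → ℝ) (x : ι → ℝ) : ι → ℝ :=
  fun i => fderiv ℝ F x (Pi.single i 1)

lemma pi_sum_single (v : ι → ℝ) : v = ∑ i, v i • (Pi.single i 1 : ι → ℝ) := by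
  have h : ∀ i : ι, v i • (Pi.single i 1 : ι → ℝ) = Pi.single i (v i) := fun i => by
    rw [← Pi.single_smul, smul_eq_mul, mul_one]
  simp only [h]
  exact (Finset.univ_sum_single v).symm

lemma clm_apply_eq_sum' {M : Type*} [AddCommGroup M] [Module ℝ M] [TopologicalSpace M]
    (l : (ι → ℝ) →L[ℝ] M) (v : ι → ℝ) : l v = ∑ i, v i • l (Pi.single i 1) := by
  conv_lhs => rw [pi_sum_single v]
  simp [map_sum]

lemma clm_apply_eq_sum (l : (ι → ℝ) →L[ℝ] ℝ) (v : ι → ℝ) :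
    l v = ∑ i, v i * l (Pi.single i 1) := by
  simpa [smul_eq_mul] using clm_apply_eq_sum' l v

lemma hasDerivAt_line (F : (ι → ℝ) → ℝ) (hF : Differentiable ℝ F) (x v : ι → ℝ) (t : ℝ) :
    HasDerivAt (fun s : ℝ => F (x + s • v)) (fderiv ℝ F (x + t • v) v) t := by
  have hl : HasDerivAt (fun s : ℝ => x + s • v) v t := by
    simpa using ((hasDerivAt_id t).smul_const v).const_add x
  exact (hF (x + t • v)).hasFDerivAt.comp_hasDerivAt t hl

lemma hasDerivAt_grad_line (F : (ι → ℝ) → ℝ) (hF : ContDiff ℝ 2 F) (x v d : ι → ℝ) (t : ℝ) :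
    HasDerivAt (fun s : ℝ => fderiv ℝ F (x + s • v) d)
      ((fderiv ℝ (fderiv ℝ F) (x + t • v) v) d) t := by
  have h1 : ContDiff ℝ 1 (fderiv ℝ F) := hF.fderiv_right (by norm_num)
  have hl : HasDerivAt (fun s : ℝ => x + s • v) v t := by
    simpa using ((hasDerivAt_id t).smul_const v).const_add x
  have h2 : HasFDerivAt (fderiv ℝ F) (fderiv ℝ (fderiv ℝ F) (x + t • v)) (x + t • v) :=
    (h1.differentiable one_ne_zero (x + t • v)).hasFDerivAt
  have h3 := h2.comp_hasDerivAt t hl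
  have h4 := (ContinuousLinearMap.apply ℝ ℝ d).hasFDerivAt.comp_hasDerivAt t h3
  exact h4

lemma pgrad_eq_deriv (F : (ι → ℝ) → ℝ) (hF : Differentiable ℝ F) (x : ι → ℝ) (i : ι) :
    deriv (fun s : ℝ => F (x + s • (Pi.single i 1 : ι → ℝ))) 0 = pgrad F x i := by
  have := (hasDerivAt_line F hF x (Pi.single i 1) 0).deriv
  simpa [pgrad] using this

lemma hess_eq (F : (ι → ℝ) → ℝ) (hF : ContDiff ℝ 2 F) (x : ι → ℝ) (i j : ι) :
    deriv (fun s : ℝ => deriv (fun r : ℝ =>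
        F (x + s • (Pi.single i 1 : ι → ℝ) + r • (Pi.single j 1 : ι → ℝ))) 0) 0
      = (fderiv ℝ (fderiv ℝ F) x (Pi.single i 1)) (Pi.single j 1) := by
  have hdF : Differentiable ℝ F := hF.differentiable (by norm_num)
  have inner : (fun s : ℝ => deriv (fun r : ℝ =>
        F (x + s • (Pi.single i 1 : ι → ℝ) + r • (Pi.single j 1 : ι → ℝ))) 0)
      = fun s : ℝ => fderiv ℝ F (x + s • (Pi.single i 1 : ι → ℝ)) (Pi.single j 1) := by
    funext s
    simpa using (hasDerivAt_line F hdF (x + s • (Pi.single i 1 : ι → ℝ)) (Pi.single j 1) 0).deriv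
  rw [inner]
  simpa using (hasDerivAt_grad_line F hF x (Pi.single i 1) (Pi.single j 1) 0).deriv

lemma bilin_eq_sum (B : (ι → ℝ) →L[ℝ] ((ι → ℝ) →L[ℝ] ℝ)) (v : ι → ℝ) :
    (B v) v = ∑ i, ∑ j, v i * v j * (B (Pi.single i 1)) (Pi.single j 1) := by
  rw [clm_apply_eq_sum' B v]
  rw [ContinuousLinearMap.sum_apply]
  refine Finset.sum_congr rfl fun i _ => ?_
  rw [ContinuousLinearMap.smul_apply, clm_apply_eq_sum (B (Pi.single i 1)) v, smul_eq_mul,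
    Finset.mul_sum]
  refine Finset.sum_congr rfl fun j _ => by ring

lemma mono_of_hess (F : (ι → ℝ) → ℝ) (hF : ContDiff ℝ 2 F) (δ : ℝ)
    (hH : ∀ x v : ι → ℝ, δ * (∑ i, v i ^ 2) ≤ (fderiv ℝ (fderiv ℝ F) x v) v)
    (w w' : ι → ℝ) :
    δ * (∑ i, (w i - w' i) ^ 2) ≤ ∑ i, (pgrad F w i - pgrad F w' i) * (w i - w' i) := by
  set v : ι → ℝ := w - w' with hv
  have hvapp : ∀ i, v i = w i - w' i := fun i => rfl
  set C := δ * (∑ i, v i ^ 2) with hC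
  set ψ : ℝ → ℝ := fun t => fderiv ℝ F (w' + t • v) v with hψdef
  have hχ : ∀ t : ℝ, HasDerivAt (fun t => ψ t - C * t)
      ((fderiv ℝ (fderiv ℝ F) (w' + t • v) v) v - C) t := by
    intro t
    have h1 := hasDerivAt_grad_line F hF w' v v t
    have h2 : HasDerivAt (fun t : ℝ => C * t) C t := by
      simpa using (hasDerivAt_id t).const_mul C
    exact h1.sub h2
  have hmono : Monotone (fun t => ψ t - C * t) := by
    apply monotone_of_deriv_nonneg
    · exact fun t => ((hχ t).differentiableAt)
    · intro t
      rw [(hχ t).deriv]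
      have := hH (w' + t • v) v
      simpa [hC] using sub_nonneg.mpr this
  have h01 := hmono (by norm_num : (0:ℝ) ≤ 1)
  have hψ0 : ψ 0 = fderiv ℝ F w' v := by simp [hψdef]
  have hψ1 : ψ 1 = fderiv ℝ F w v := by
    have h1 : w' + (1:ℝ) • v = w := by
      funext i; simp [hvapp]
    show fderiv ℝ F (w' + (1:ℝ) • v) v = _
    rw [h1]
  have hkey : C ≤ fderiv ℝ F w v - fderiv ℝ F w' v := by
    have := h01
    simp only [hψ0, hψ1] at this
    linarith
  have hexpand : fderiv ℝ F w v - fderiv ℝ F w' v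
      = ∑ i, (pgrad F w i - pgrad F w' i) * (w i - w' i) := by
    rw [clm_apply_eq_sum (fderiv ℝ F w) v, clm_apply_eq_sum (fderiv ℝ F w') v,
      ← Finset.sum_sub_distrib]
    refine Finset.sum_congr rfl fun i _ => ?_
    rw [hvapp]; simp only [pgrad]; ring
  calc δ * (∑ i, (w i - w' i) ^ 2) = C := rfl
    _ ≤ _ := by rw [← hexpand]; exact hkey

lemma pgrad_continuous (F : (ι → ℝ) → ℝ) (hF : ContDiff ℝ 2 F) (i : ι) :
    Continuous fun x => pgrad F x i :=
  (ContinuousLinearMap.apply ℝ ℝ (Pi.single i 1 : ι → ℝ)).continuous.comp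
    (hF.continuous_fderiv (by norm_num))

variable {κ : Type*} [Fintype κ] [DecidableEq κ]

lemma fderiv_comp_affine (F : (ι → ℝ) → ℝ) (hF : ContDiff ℝ 2 F)
    (T : (κ → ℝ) →L[ℝ] (ι → ℝ)) (c : ι → ℝ) (x : κ → ℝ) :
    fderiv ℝ (fun w => F (T w + c)) x = (fderiv ℝ F (T x + c)).comp T := by
  have hA : HasFDerivAt (fun w : κ → ℝ => T w + c) (T : (κ → ℝ) →L[ℝ] (ι → ℝ)) x :=
    T.hasFDerivAt.add_const c
  exact ((hF.differentiable (by norm_num) (T x + c)).hasFDerivAt.comp x hA).fderiv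

lemma pgrad_comp_affine (F : (ι → ℝ) → ℝ) (hF : ContDiff ℝ 2 F)
    (T : (κ → ℝ) →L[ℝ] (ι → ℝ)) (c : ι → ℝ) (x : κ → ℝ) (i : κ) :
    pgrad (fun w => F (T w + c)) x i = fderiv ℝ F (T x + c) (T (Pi.single i 1)) := by
  simp only [pgrad, fderiv_comp_affine F hF T c x, ContinuousLinearMap.comp_apply]

lemma hess_comp_affine (F : (ι → ℝ) → ℝ) (hF : ContDiff ℝ 2 F)
    (T : (κ → ℝ) →L[ℝ] (ι → ℝ)) (c : ι → ℝ) (x v : κ → ℝ) :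
    (fderiv ℝ (fderiv ℝ (fun w => F (T w + c))) x v) v
      = (fderiv ℝ (fderiv ℝ F) (T x + c) (T v)) (T v) := by
  have hFθ : ContDiff ℝ 2 (fun w => F (T w + c)) :=
    hF.comp ((T.contDiff).add contDiff_const)
  have h1 := hasDerivAt_grad_line (fun w => F (T w + c)) hFθ x v v 0
  have h2 := hasDerivAt_grad_line F hF (T x + c) (T v) (T v) 0
  have heq : (fun s : ℝ => fderiv ℝ (fun w => F (T w + c)) (x + s • v) v)
      = fun s : ℝ => fderiv ℝ F ((T x + c) + s • (T v)) (T v) := by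
    funext s
    rw [fderiv_comp_affine F hF T c]
    rw [ContinuousLinearMap.comp_apply]
    congr 2
    rw [_root_.map_add, _root_.map_smul]
    abel
  rw [heq] at h1
  have := h1.unique h2
  simpa using this

lemma exists_antilip {E F : Type*} [NormedAddCommGroup E] [NormedSpace ℝ E]
    [FiniteDimensional ℝ E] [NormedAddCommGroup F] [NormedSpace ℝ F]
    (T : E →ₗ[ℝ] F) (h : Function.Injective T) :
    ∃ c > 0, ∀ x, c * ‖x‖ ≤ ‖T x‖ := by
  let e := LinearEquiv.ofInjective T h
  let S : (LinearMap.range T) →L[ℝ] E := LinearMap.toContinuousLinearMap e.symm.toLinearMap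
  refine ⟨(‖S‖ + 1)⁻¹, by positivity, fun x => ?_⟩
  have h1 : ‖x‖ ≤ (‖S‖ + 1) * ‖T x‖ := by
    have h2 : ‖S (e x)‖ ≤ ‖S‖ * ‖e x‖ := S.le_opNorm _
    have h3 : S (e x) = x := by
      simp [S, e]
    have h4 : ‖e x‖ = ‖T x‖ := by
      have : ((e x : LinearMap.range T) : F) = T x := LinearEquiv.ofInjective_apply T (h := h) x
      rw [← this]
      rfl
    rw [h3, h4] at h2
    nlinarith [norm_nonneg (T x), norm_nonneg S]
  rw [inv_mul_le_iff₀ (by positivity)]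
  linarith

lemma norm_bound_on_ball {E F : Type*} [NormedAddCommGroup E] [NormedSpace ℝ E]
    [FiniteDimensional ℝ E] [NormedAddCommGroup F]
    (G : E → F) (hGc : Continuous G) (ρ : ℝ) :
    ∃ φ : ℝ, 0 ≤ φ ∧ ∀ x, ‖x‖ ≤ ρ → ‖G x‖ ≤ φ := by
  obtain ⟨Cb, hCb⟩ := (isCompact_closedBall (0:E) ρ).exists_bound_of_continuousOn
    hGc.continuousOn
  refine ⟨max Cb 0, le_max_right _ _, fun x hx => ?_⟩
  exact le_trans (hCb x (by simpa [Metric.mem_closedBall, dist_eq_norm] using hx))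
    (le_max_left _ _)

lemma sqrt_sq_add_sq_le {x y : ℝ} (hx : 0 ≤ x) (hy : 0 ≤ y) :
    Real.sqrt (x ^ 2 + y ^ 2) ≤ x + y := by
  have h1 : x ^ 2 + y ^ 2 ≤ (x + y) ^ 2 := by nlinarith
  calc Real.sqrt (x ^ 2 + y ^ 2) ≤ Real.sqrt ((x + y) ^ 2) := Real.sqrt_le_sqrt h1
    _ = x + y := by rw [Real.sqrt_sq (by linarith)]

set_option maxHeartbeats 1000000 in
lemma coercive_abstract {E F : Type*}
    [NormedAddCommGroup E] [InnerProductSpace ℝ E] [FiniteDimensional ℝ E]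
    [NormedAddCommGroup F] [InnerProductSpace ℝ F] [FiniteDimensional ℝ F]
    (G : E → E) (hGc : Continuous G) (δ : ℝ) (hδ : 0 < δ)
    (hmono : ∀ w w' : E, δ * ‖w - w'‖ ^ 2 ≤ ⟪G w - G w', w - w'⟫)
    (K : E →ₗ[ℝ] F) (Kt : F →ₗ[ℝ] E)
    (hadj : ∀ (ν : F) (w : E), ⟪Kt ν, w⟫ = ⟪ν, K w⟫)
    (hinj : Function.Injective Kt) :
    ∀ R : ℝ, ∃ M : ℝ, ∀ (w : E) (ν : F),
      M ≤ Real.sqrt (‖w‖ ^ 2 + ‖ν‖ ^ 2) →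
      R ≤ Real.sqrt (‖G w + Kt ν‖ ^ 2 + ‖K w‖ ^ 2) := by
  intro R
  rcases le_or_gt R 0 with hR | hR
  · exact ⟨0, fun w ν _ => le_trans hR (Real.sqrt_nonneg _)⟩
  obtain ⟨σ, hσ, hKt⟩ := exists_antilip Kt hinj
  set κS := LinearMap.ker K with hκS
  have hinj2 : Function.Injective (K.comp κSᗮ.subtype) := by
    rw [← LinearMap.ker_eq_bot]
    rw [Submodule.eq_bot_iff]
    rintro ⟨x, hx⟩ hx0
    have hxk : x ∈ κS := by
      simpa [hκS, LinearMap.mem_ker] using hx0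
    have : x = 0 :=
      Submodule.disjoint_def.mp (Submodule.orthogonal_disjoint κS) x hxk hx
    simpa using this
  obtain ⟨c, hc, hK⟩ := exists_antilip (K.comp κSᗮ.subtype) hinj2
  obtain ⟨φ₁, hφ₁0, hφ₁⟩ := norm_bound_on_ball G hGc (R / c)
  set ρ₁ := R / c + (R + φ₁) / δ with hρ₁
  obtain ⟨φ₂, hφ₂0, hφ₂⟩ := norm_bound_on_ball G hGc ρ₁
  refine ⟨ρ₁ + (R + φ₂) / σ + 1, fun w ν hM => ?_⟩
  by_contra hcon
  push_neg at hcon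
  have hsq : ‖G w + Kt ν‖ ^ 2 + ‖K w‖ ^ 2 < R ^ 2 := (Real.sqrt_lt' hR).mp hcon
  set a := G w + Kt ν with ha
  have haR : ‖a‖ < R := by
    refine lt_of_pow_lt_pow_left₀ 2 (le_of_lt hR) ?_
    nlinarith [sq_nonneg ‖K w‖]
  have hbR : ‖K w‖ < R := by
    refine lt_of_pow_lt_pow_left₀ 2 (le_of_lt hR) ?_
    nlinarith [sq_nonneg ‖a‖]
  set p : E := (κS.orthogonalProjectionOnto w : E) with hp
  set q : E := w - p with hq
  have hqmem : q ∈ κSᗮ := κS.sub_starProjection_mem_orthogonal w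
  have hKp : K p = 0 := LinearMap.mem_ker.mp (κS.orthogonalProjectionOnto w).2
  have hKq : K q = K w := by rw [hq, map_sub, hKp, sub_zero]
  have hqn : ‖q‖ ≤ R / c := by
    have h1 : c * ‖q‖ ≤ ‖K q‖ := by
      have := hK ⟨q, hqmem⟩
      simpa using this
    rw [le_div_iff₀ hc]
    rw [hKq] at h1
    calc ‖q‖ * c = c * ‖q‖ := mul_comm _ _
      _ ≤ ‖K w‖ := h1
      _ ≤ R := le_of_lt hbR
  have hGq : ‖G q‖ ≤ φ₁ := hφ₁ q hqn
  have hwq : w - q = p := by rw [hq]; abel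
  have hmono2 : δ * ‖p‖ ^ 2 ≤ ⟪G w, p⟫ - ⟪G q, p⟫ := by
    have := hmono w q
    rw [hwq, inner_sub_left] at this
    exact this
  have hap : ⟪a, p⟫ = ⟪G w, p⟫ := by
    rw [ha, inner_add_left, hadj, hKp, inner_zero_right, add_zero]
  have hpb : ‖p‖ ≤ (R + φ₁) / δ := by
    rcases eq_or_lt_of_le (norm_nonneg p) with h0 | h0
    · rw [← h0]; positivity
    · rw [le_div_iff₀ hδ]
      have h1 : ⟪G w, p⟫ ≤ R * ‖p‖ := by
        rw [← hap]
        calc ⟪a, p⟫ ≤ ‖a‖ * ‖p‖ := real_inner_le_norm a p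
          _ ≤ R * ‖p‖ := by nlinarith
      have h2 : -⟪G q, p⟫ ≤ φ₁ * ‖p‖ := by
        have := abs_real_inner_le_norm (G q) p
        have h3 : ‖G q‖ * ‖p‖ ≤ φ₁ * ‖p‖ := by nlinarith
        cases' abs_le.mp this with hl hr
        linarith
      have h4 : δ * ‖p‖ ^ 2 ≤ (R + φ₁) * ‖p‖ := by nlinarith
      nlinarith
  have hwb : ‖w‖ ≤ ρ₁ := by
    have : w = q + p := by rw [hq]; abel
    calc ‖w‖ = ‖q + p‖ := by rw [← this]
      _ ≤ ‖q‖ + ‖p‖ := norm_add_le _ _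
      _ ≤ ρ₁ := by rw [hρ₁]; linarith
  have hGw : ‖G w‖ ≤ φ₂ := hφ₂ w hwb
  have hνb : ‖ν‖ ≤ (R + φ₂) / σ := by
    rw [le_div_iff₀ hσ]
    have h1 : σ * ‖ν‖ ≤ ‖Kt ν‖ := hKt ν
    have h2 : Kt ν = a - G w := by rw [ha]; abel
    have h3 : ‖Kt ν‖ ≤ ‖a‖ + ‖G w‖ := by rw [h2]; exact norm_sub_le _ _
    nlinarith
  have hfin : Real.sqrt (‖w‖ ^ 2 + ‖ν‖ ^ 2) ≤ ρ₁ + (R + φ₂) / σ := by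
    calc Real.sqrt (‖w‖ ^ 2 + ‖ν‖ ^ 2) ≤ ‖w‖ + ‖ν‖ :=
        sqrt_sq_add_sq_le (norm_nonneg _) (norm_nonneg _)
      _ ≤ ρ₁ + (R + φ₂) / σ := add_le_add hwb hνb
  linarith

end AuxCalc


section Glue

open scoped RealInnerProductSpace

set_option linter.unusedSectionVars false

variable {n k l m : ℕ}

/-- `f` as a function on the sum-indexed coordinate space. -/
noncomputable def F0 (f : (Fin n → ℝ) → (Fin m → ℝ) → ℝ) : ((Fin n ⊕ Fin m) → ℝ) → ℝ :=
  fun w => f (fun a => w (Sum.inl a)) (fun a => w (Sum.inr a))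

lemma contDiff_F0 {f : (Fin n → ℝ) → (Fin m → ℝ) → ℝ}
    (h : ContDiff ℝ 2 (fun p : (Fin n → ℝ) × (Fin m → ℝ) => f p.1 p.2)) :
    ContDiff ℝ 2 (F0 f) := by
  have hsplit : ContDiff ℝ 2 (fun w : (Fin n ⊕ Fin m) → ℝ =>
      ((fun a => w (Sum.inl a), fun a => w (Sum.inr a)) : (Fin n → ℝ) × (Fin m → ℝ))) := by
    apply ContDiff.prodMk
    · exact contDiff_pi.mpr fun a => (ContinuousLinearMap.proj (R := ℝ) (φ := fun _ : Fin n ⊕ Fin m => ℝ) (Sum.inl a)).contDiff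
    · exact contDiff_pi.mpr fun a => (ContinuousLinearMap.proj (R := ℝ) (φ := fun _ : Fin n ⊕ Fin m => ℝ) (Sum.inr a)).contDiff
  exact h.comp hsplit

lemma dot_hess {ι : Type*} [Fintype ι] [DecidableEq ι]
    (H : Matrix ι ι ℝ) (δ : ℝ) (v : ι → ℝ) (h : (H - δ • 1).PosSemidef) :
    δ * ∑ i, v i ^ 2 ≤ ∑ i, ∑ j, v i * v j * H i j := by
  have h2 := h.dotProduct_mulVec_nonneg v
  have ea : dotProduct (star v) ((H - δ • (1 : Matrix ι ι ℝ)).mulVec v)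
      = dotProduct v (H.mulVec v) - δ * dotProduct v v := by
    rw [star_trivial, Matrix.sub_mulVec, dotProduct_sub, Matrix.smul_mulVec,
      Matrix.one_mulVec, dotProduct_smul, smul_eq_mul]
  have eb : dotProduct v (H.mulVec v) = ∑ i, ∑ j, v i * v j * H i j := by
    simp only [dotProduct, Matrix.mulVec, Finset.mul_sum]
    exact Finset.sum_congr rfl fun i _ => Finset.sum_congr rfl fun j _ => by ring
  have ec : dotProduct v v = ∑ i, v i ^ 2 := by
    simp [dotProduct, pow_two]
  rw [ea, eb, ec] at h2
  linarith

/-- The embedding `(z,u) ↦ (P₁ z, u)` as a continuous linear map. -/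
noncomputable def Tmap (P₁ : Matrix (Fin n) (Fin k) ℝ) :
    ((Fin k ⊕ Fin m) → ℝ) →L[ℝ] ((Fin n ⊕ Fin m) → ℝ) :=
  LinearMap.toContinuousLinearMap (LinearMap.pi (fun a : Fin n ⊕ Fin m => Sum.rec
    (fun x => (LinearMap.proj x).comp (P₁.mulVecLin.comp (LinearMap.funLeft ℝ ℝ Sum.inl)))
    (fun y => (LinearMap.proj y).comp (LinearMap.funLeft ℝ ℝ Sum.inr)) a))

lemma Tmap_apply (P₁ : Matrix (Fin n) (Fin k) ℝ) (w : (Fin k ⊕ Fin m) → ℝ) :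
    Tmap (m := m) P₁ w
      = Sum.elim (P₁.mulVec fun i => w (Sum.inl i)) (fun j => w (Sum.inr j)) := by
  funext a
  cases a with
  | inl x => rfl
  | inr y => rfl

noncomputable def cvec (P₂ : Matrix (Fin n) (Fin l) ℝ) (y2s : Fin l → ℝ) :
    (Fin n ⊕ Fin m) → ℝ := Sum.elim (P₂.mulVec y2s) 0

lemma mulVec_orth_sq {P₁ : Matrix (Fin n) (Fin k) ℝ} (hP₁ : P₁ᵀ * P₁ = 1) (a : Fin k → ℝ) :
    ∑ x, (P₁.mulVec a) x ^ 2 = ∑ i, a i ^ 2 := by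
  have h1 : dotProduct (P₁.mulVec a) (P₁.mulVec a) = dotProduct a a := by
    rw [dotProduct_mulVec]
    have h2 : Matrix.vecMul (P₁.mulVec a) P₁ = a := by
      rw [← Matrix.vecMul_transpose, Matrix.vecMul_vecMul, hP₁, Matrix.vecMul_one]
    rw [h2]
  simpa [dotProduct, pow_two] using h1

variable (f : (Fin n → ℝ) → (Fin m → ℝ) → ℝ) (P₁ : Matrix (Fin n) (Fin k) ℝ)
  (P₂ : Matrix (Fin n) (Fin l) ℝ) (y2s : Fin l → ℝ)

/-- The reduced objective. -/
noncomputable def Ftheta : ((Fin k ⊕ Fin m) → ℝ) → ℝ :=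
  fun w => F0 f (Tmap P₁ w + cvec P₂ y2s)

lemma hessF0_bound {δ : ℝ} (hA2 : A2Hyp f δ) (hF0 : ContDiff ℝ 2 (F0 f)) :
    ∀ x v : (Fin n ⊕ Fin m) → ℝ,
      δ * (∑ i, v i ^ 2) ≤ (fderiv ℝ (fderiv ℝ (F0 f)) x v) v := by
  intro x v
  have hx : Sum.elim (fun a => x (Sum.inl a)) (fun a => x (Sum.inr a)) = x := by
    funext a; cases a <;> rfl
  have hhess : ∀ i j, hessMat f (fun a => x (Sum.inl a)) (fun a => x (Sum.inr a)) i j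
      = (fderiv ℝ (fderiv ℝ (F0 f)) x (Pi.single i 1)) (Pi.single j 1) := by
    intro i j
    have h0 : hessMat f (fun a => x (Sum.inl a)) (fun a => x (Sum.inr a)) i j
        = deriv (fun s : ℝ => deriv (fun r : ℝ =>
            F0 f (Sum.elim (fun a => x (Sum.inl a)) (fun a => x (Sum.inr a))
              + s • (Pi.single i 1 : (Fin n ⊕ Fin m) → ℝ)
              + r • (Pi.single j 1 : (Fin n ⊕ Fin m) → ℝ))) 0) 0 := rfl
    rw [h0, hx, hess_eq (F0 f) hF0 x i j]
  rw [bilin_eq_sum]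
  have := dot_hess (hessMat f (fun a => x (Sum.inl a)) (fun a => x (Sum.inr a))) δ v
    (hA2.2 _ _)
  refine le_trans this (le_of_eq ?_)
  exact Finset.sum_congr rfl fun i _ => Finset.sum_congr rfl fun j _ => by rw [hhess]

lemma hessFtheta_bound {δ : ℝ} (hA2 : A2Hyp f δ) (hF0 : ContDiff ℝ 2 (F0 f))
    (hP₁ : P₁ᵀ * P₁ = 1) :
    ∀ x v : (Fin k ⊕ Fin m) → ℝ,
      δ * (∑ i, v i ^ 2) ≤ (fderiv ℝ (fderiv ℝ (Ftheta f P₁ P₂ y2s)) x v) v := by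
  intro x v
  have h1 : (fderiv ℝ (fderiv ℝ (Ftheta f P₁ P₂ y2s)) x v) v
      = (fderiv ℝ (fderiv ℝ (F0 f)) (Tmap P₁ x + cvec P₂ y2s) (Tmap P₁ v)) (Tmap P₁ v) :=
    hess_comp_affine (F0 f) hF0 (Tmap P₁) (cvec P₂ y2s) x v
  rw [h1]
  refine le_trans (le_of_eq ?_) (hessF0_bound f hA2 hF0 _ (Tmap P₁ v))
  congr 1
  have hTsum : ∑ a, (Tmap (m := m) P₁ v) a ^ 2 = ∑ i, v i ^ 2 := by
    conv_lhs => rw [Tmap_apply, Fintype.sum_sum_type]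
    conv_rhs => rw [Fintype.sum_sum_type]
    simp only [Sum.elim_inl, Sum.elim_inr]
    rw [mulVec_orth_sq hP₁]
  rw [hTsum]

lemma pgradF0_inl (hF0 : ContDiff ℝ 2 (F0 f)) (x : Fin n → ℝ) (u : Fin m → ℝ) (b : Fin n) :
    pgrad (F0 f) (Sum.elim x u) (Sum.inl b) = gradX f x u b := by
  rw [← pgrad_eq_deriv (F0 f) (hF0.differentiable (by norm_num))]
  unfold gradX
  congr 1
  funext s
  unfold F0
  congr 1
  · funext a; simp [Pi.single_apply]
  · funext a; simp [Pi.single_apply]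

lemma pgradF0_inr (hF0 : ContDiff ℝ 2 (F0 f)) (x : Fin n → ℝ) (u : Fin m → ℝ) (b : Fin m) :
    pgrad (F0 f) (Sum.elim x u) (Sum.inr b) = gradU f x u b := by
  rw [← pgrad_eq_deriv (F0 f) (hF0.differentiable (by norm_num))]
  unfold gradU
  congr 1
  funext s
  unfold F0
  congr 1
  · funext a; simp [Pi.single_apply]
  · funext a; simp [Pi.single_apply]

lemma Tmap_point (z : Fin k → ℝ) (u : Fin m → ℝ) :
    Tmap P₁ (Sum.elim z u) + cvec P₂ y2s
      = Sum.elim (P₁.mulVec z + P₂.mulVec y2s) u := by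
  funext a
  cases a with
  | inl x => simp [Tmap_apply, cvec]
  | inr y => simp [Tmap_apply, cvec]

lemma pgradFtheta_inl (hF0 : ContDiff ℝ 2 (F0 f)) (z : Fin k → ℝ) (u : Fin m → ℝ) (i : Fin k) :
    pgrad (Ftheta f P₁ P₂ y2s) (Sum.elim z u) (Sum.inl i)
      = P₁ᵀ.mulVec (gradX f (P₁.mulVec z + P₂.mulVec y2s) u) i := by
  unfold Ftheta
  rw [pgrad_comp_affine (F0 f) hF0 (Tmap P₁) (cvec P₂ y2s), Tmap_point,
    clm_apply_eq_sum, Fintype.sum_sum_type]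
  have hTE : Tmap (m := m) P₁ (Pi.single (Sum.inl i) 1)
      = Sum.elim (fun x => P₁ x i) (0 : Fin m → ℝ) := by
    rw [Tmap_apply]
    funext a
    cases a with
    | inl x =>
      simp [Matrix.mulVec, dotProduct, Pi.single_apply, Finset.sum_ite_eq,
        Finset.sum_ite_eq', mul_ite, mul_one, mul_zero]
    | inr y =>
      simp [Pi.single_apply]
  simp only [hTE, Sum.elim_inl, Sum.elim_inr, Pi.zero_apply, zero_mul, Finset.sum_const_zero,
    add_zero]
  have hpg : ∀ a, (fderiv ℝ (F0 f) (Sum.elim (P₁.mulVec z + P₂.mulVec y2s) u)) (Pi.single (Sum.inl a) 1)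
      = gradX f (P₁.mulVec z + P₂.mulVec y2s) u a := fun a =>
    pgradF0_inl f hF0 _ _ a
  simp only [hpg]
  simp [Matrix.mulVec, dotProduct, Matrix.transpose_apply]

lemma pgradFtheta_inr (hF0 : ContDiff ℝ 2 (F0 f)) (z : Fin k → ℝ) (u : Fin m → ℝ) (j : Fin m) :
    pgrad (Ftheta f P₁ P₂ y2s) (Sum.elim z u) (Sum.inr j)
      = gradU f (P₁.mulVec z + P₂.mulVec y2s) u j := by
  unfold Ftheta
  rw [pgrad_comp_affine (F0 f) hF0 (Tmap P₁) (cvec P₂ y2s), Tmap_point,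
    clm_apply_eq_sum, Fintype.sum_sum_type]
  have hTE : Tmap (m := m) P₁ (Pi.single (Sum.inr j) 1)
      = Sum.elim (0 : Fin n → ℝ) (Pi.single j 1 : Fin m → ℝ) := by
    rw [Tmap_apply]
    funext a
    cases a with
    | inl x =>
      simp [Matrix.mulVec, dotProduct, Pi.single_apply]
    | inr y =>
      simp [Pi.single_apply]
  simp only [hTE, Sum.elim_inl, Sum.elim_inr, Pi.zero_apply, zero_mul, Finset.sum_const_zero,
    zero_add]
  have hpg : ∀ a, (fderiv ℝ (F0 f) (Sum.elim (P₁.mulVec z + P₂.mulVec y2s) u)) (Pi.single (Sum.inr a) 1)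
      = gradU f (P₁.mulVec z + P₂.mulVec y2s) u a := fun a =>
    pgradF0_inr f hF0 _ _ a
  simp only [hpg]
  simp [Pi.single_apply, ite_mul, one_mul, zero_mul]

end Glue


section Final

open scoped RealInnerProductSpace

set_option linter.unusedSectionVars false

variable {n k l m : ℕ}

/-- The constraint map `K(z,u) = A₁₁z + B₁u` as a linear map on Euclidean spaces. -/
noncomputable def Kmap (A11 : Matrix (Fin k) (Fin k) ℝ) (B1 : Matrix (Fin k) (Fin m) ℝ) :
    EuclideanSpace ℝ (Fin k ⊕ Fin m) →ₗ[ℝ] EuclideanSpace ℝ (Fin k) :=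
  (WithLp.linearEquiv 2 ℝ (Fin k → ℝ)).symm.toLinearMap ∘ₗ
    (A11.mulVecLin ∘ₗ LinearMap.funLeft ℝ ℝ Sum.inl
      + B1.mulVecLin ∘ₗ LinearMap.funLeft ℝ ℝ Sum.inr) ∘ₗ
    (WithLp.linearEquiv 2 ℝ ((Fin k ⊕ Fin m) → ℝ)).toLinearMap

/-- Its adjoint `K'ν = (A₁₁ᵀν, B₁ᵀν)`. -/
noncomputable def Ktmap (A11 : Matrix (Fin k) (Fin k) ℝ) (B1 : Matrix (Fin k) (Fin m) ℝ) :
    EuclideanSpace ℝ (Fin k) →ₗ[ℝ] EuclideanSpace ℝ (Fin k ⊕ Fin m) :=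
  (WithLp.linearEquiv 2 ℝ ((Fin k ⊕ Fin m) → ℝ)).symm.toLinearMap ∘ₗ
    (LinearMap.pi (fun a : Fin k ⊕ Fin m => Sum.rec
      (fun x => (LinearMap.proj x).comp A11ᵀ.mulVecLin)
      (fun y => (LinearMap.proj y).comp B1ᵀ.mulVecLin) a)) ∘ₗ
    (WithLp.linearEquiv 2 ℝ (Fin k → ℝ)).toLinearMap

lemma Kmap_apply (A11 : Matrix (Fin k) (Fin k) ℝ) (B1 : Matrix (Fin k) (Fin m) ℝ)
    (w : EuclideanSpace ℝ (Fin k ⊕ Fin m)) (i : Fin k) :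
    Kmap A11 B1 w i
      = (A11.mulVec (fun a => w (Sum.inl a)) + B1.mulVec (fun a => w (Sum.inr a))) i := rfl

lemma Ktmap_apply_inl (A11 : Matrix (Fin k) (Fin k) ℝ) (B1 : Matrix (Fin k) (Fin m) ℝ)
    (ν : EuclideanSpace ℝ (Fin k)) (i : Fin k) :
    Ktmap A11 B1 ν (Sum.inl i) = A11ᵀ.mulVec ν i := rfl

lemma Ktmap_apply_inr (A11 : Matrix (Fin k) (Fin k) ℝ) (B1 : Matrix (Fin k) (Fin m) ℝ)
    (ν : EuclideanSpace ℝ (Fin k)) (j : Fin m) :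
    Ktmap A11 B1 ν (Sum.inr j) = B1ᵀ.mulVec ν j := rfl

/-- The gradient of the reduced objective on Euclidean space. -/
noncomputable def Gmap (f : (Fin n → ℝ) → (Fin m → ℝ) → ℝ) (P₁ : Matrix (Fin n) (Fin k) ℝ)
    (P₂ : Matrix (Fin n) (Fin l) ℝ) (y2s : Fin l → ℝ) :
    EuclideanSpace ℝ (Fin k ⊕ Fin m) → EuclideanSpace ℝ (Fin k ⊕ Fin m) :=
  fun w => (WithLp.equiv 2 ((Fin k ⊕ Fin m) → ℝ)).symm
    (pgrad (Ftheta f P₁ P₂ y2s) ((WithLp.equiv 2 ((Fin k ⊕ Fin m) → ℝ)) w))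

variable {f : (Fin n → ℝ) → (Fin m → ℝ) → ℝ} {P₁ : Matrix (Fin n) (Fin k) ℝ}
  {P₂ : Matrix (Fin n) (Fin l) ℝ} {y2s : Fin l → ℝ}

lemma Gmap_continuous (hFθ : ContDiff ℝ 2 (Ftheta f P₁ P₂ y2s)) :
    Continuous (Gmap f P₁ P₂ y2s) := by
  have h1 : Continuous fun x : (Fin k ⊕ Fin m) → ℝ => pgrad (Ftheta f P₁ P₂ y2s) x :=
    continuous_pi fun i => pgrad_continuous _ hFθ i
  exact (PiLp.continuous_toLp 2 _).comp
    (h1.comp (PiLp.continuous_ofLp 2 _))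

lemma enorm_sq {ι : Type*} [Fintype ι] (x : EuclideanSpace ℝ ι) :
    ‖x‖ ^ 2 = ∑ i, x i ^ 2 := by
  rw [EuclideanSpace.norm_eq, Real.sq_sqrt (by positivity)]
  exact Finset.sum_congr rfl fun i _ => by rw [Real.norm_eq_abs, sq_abs]

lemma einner_eq {ι : Type*} [Fintype ι] (x y : EuclideanSpace ℝ ι) :
    ⟪x, y⟫ = ∑ i, x i * y i := by
  simp [PiLp.inner_apply, RCLike.inner_apply, conj_trivial, mul_comm]

lemma vnorm_sq {d : ℕ} (x : Fin d → ℝ) : vnorm x ^ 2 = ∑ i, x i ^ 2 :=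
  Real.sq_sqrt (by positivity)

lemma Gmap_mono {δ : ℝ} (hA2 : A2Hyp f δ) (hF0 : ContDiff ℝ 2 (F0 f))
    (hFθ : ContDiff ℝ 2 (Ftheta f P₁ P₂ y2s)) (hP₁ : P₁ᵀ * P₁ = 1) :
    ∀ w w' : EuclideanSpace ℝ (Fin k ⊕ Fin m),
      δ * ‖w - w'‖ ^ 2 ≤ ⟪Gmap f P₁ P₂ y2s w - Gmap f P₁ P₂ y2s w', w - w'⟫ := by
  intro w w'
  have key := mono_of_hess (Ftheta f P₁ P₂ y2s) hFθ δ
    (hessFtheta_bound f P₁ P₂ y2s hA2 hF0 hP₁)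
    ((WithLp.equiv 2 ((Fin k ⊕ Fin m) → ℝ)) w) ((WithLp.equiv 2 ((Fin k ⊕ Fin m) → ℝ)) w')
  have hn : ‖w - w'‖ ^ 2 = ∑ i, (w i - w' i) ^ 2 := by
    rw [enorm_sq]
    exact Finset.sum_congr rfl fun i _ => by rw [PiLp.sub_apply]
  have hi : ⟪Gmap f P₁ P₂ y2s w - Gmap f P₁ P₂ y2s w', w - w'⟫
      = ∑ i, (pgrad (Ftheta f P₁ P₂ y2s) w i - pgrad (Ftheta f P₁ P₂ y2s) w' i)
          * (w i - w' i) := by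
    rw [einner_eq]
    refine Finset.sum_congr rfl fun i _ => ?_
    rw [PiLp.sub_apply, PiLp.sub_apply]
    rfl
  rw [hn, hi]
  exact key

lemma Kmap_adj (A11 : Matrix (Fin k) (Fin k) ℝ) (B1 : Matrix (Fin k) (Fin m) ℝ) :
    ∀ (ν : EuclideanSpace ℝ (Fin k)) (w : EuclideanSpace ℝ (Fin k ⊕ Fin m)),
      ⟪Ktmap A11 B1 ν, w⟫ = ⟪ν, Kmap A11 B1 w⟫ := by
  intro ν w
  rw [einner_eq, einner_eq, Fintype.sum_sum_type]
  have hL : (∑ i, Ktmap A11 B1 ν (Sum.inl i) * w (Sum.inl i))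
        + (∑ j, Ktmap A11 B1 ν (Sum.inr j) * w (Sum.inr j))
      = dotProduct (A11ᵀ.mulVec ν) (fun a => w (Sum.inl a))
        + dotProduct (B1ᵀ.mulVec ν) (fun a => w (Sum.inr a)) := rfl
  have hR : (∑ i, ν i * Kmap A11 B1 w i)
      = dotProduct ν
          (A11.mulVec (fun a => w (Sum.inl a)) + B1.mulVec (fun a => w (Sum.inr a))) := rfl
  rw [hL, hR]
  rw [Matrix.mulVec_transpose, Matrix.mulVec_transpose, ← dotProduct_mulVec,
    ← dotProduct_mulVec, dotProduct_add]

lemma Ktmap_inj {A11 : Matrix (Fin k) (Fin k) ℝ} {B1 : Matrix (Fin k) (Fin m) ℝ}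
    (hc : Controllable A11 B1) : Function.Injective (Ktmap A11 B1) := by
  have h0 : ∀ ν : EuclideanSpace ℝ (Fin k), Ktmap A11 B1 ν = 0 → ν = 0 := by
    intro ν hν
    have hA : Matrix.vecMul ν A11 = 0 := by
      rw [← Matrix.mulVec_transpose]
      funext i
      exact congrArg (fun x => x (Sum.inl i)) hν
    have hB : Matrix.vecMul ν B1 = 0 := by
      rw [← Matrix.mulVec_transpose]
      funext j
      exact congrArg (fun x => x (Sum.inr j)) hν
    have hpow : ∀ i : ℕ, i ≠ 0 → Matrix.vecMul ν (A11 ^ i) = 0 := by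
      intro i hi
      induction i with
      | zero => exact absurd rfl hi
      | succ d hd =>
        rcases Nat.eq_zero_or_pos d with h | h
        · subst h; simpa [pow_one] using hA
        · rw [pow_succ, ← Matrix.vecMul_vecMul, hd (Nat.pos_iff_ne_zero.mp h),
            Matrix.zero_vecMul]
    have hall : ∀ i : ℕ, i < k → Matrix.vecMul ν (A11 ^ i * B1) = 0 := by
      intro i _
      rcases Nat.eq_zero_or_pos i with h | h
      · subst h; simpa [pow_zero, one_mul] using hB
      · rw [← Matrix.vecMul_vecMul, hpow i (Nat.pos_iff_ne_zero.mp h), Matrix.zero_vecMul]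
    exact (WithLp.ofLp_eq_zero 2).mp (hc _ hall)
  intro a b hab
  have := h0 (a - b) (by rw [map_sub, hab, sub_self])
  exact sub_eq_zero.mp this

end Final


/-- Coercivity of the stationarity map `g` (part of the proof of Theorem 5.2). -/
theorem stationarity_map_coercive {n k l m : ℕ}
    (f : (Fin n → ℝ) → (Fin m → ℝ) → ℝ) (δ : ℝ) (hδ : 0 < δ) (hA2 : A2Hyp f δ)
    (A11 : Matrix (Fin k) (Fin k) ℝ) (B1 : Matrix (Fin k) (Fin m) ℝ)
    (hc : Controllable A11 B1)
    (P₁ : Matrix (Fin n) (Fin k) ℝ) (hP₁ : P₁ᵀ * P₁ = 1)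
    (P₂ : Matrix (Fin n) (Fin l) ℝ) (y2s : Fin l → ℝ) :
    ∀ R : ℝ, ∃ M : ℝ, ∀ (z : Fin k → ℝ) (u : Fin m → ℝ) (ν : Fin k → ℝ),
      M ≤ Real.sqrt (vnorm z ^ 2 + vnorm u ^ 2 + vnorm ν ^ 2) →
      R ≤ Real.sqrt
        (vnorm (P₁ᵀ.mulVec (gradX f (P₁.mulVec z + P₂.mulVec y2s) u) + A11ᵀ.mulVec ν) ^ 2 +
         vnorm (gradU f (P₁.mulVec z + P₂.mulVec y2s) u + B1ᵀ.mulVec ν) ^ 2 +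
         vnorm (A11.mulVec z + B1.mulVec u) ^ 2) := by
  intro R
  have hF0 : ContDiff ℝ 2 (F0 f) := contDiff_F0 hA2.1
  have hFθ : ContDiff ℝ 2 (Ftheta f P₁ P₂ y2s) :=
    hF0.comp (((Tmap P₁).contDiff).add contDiff_const)
  obtain ⟨M, hM⟩ := coercive_abstract (Gmap f P₁ P₂ y2s) (Gmap_continuous hFθ) δ hδ
    (Gmap_mono hA2 hF0 hFθ hP₁) (Kmap A11 B1) (Ktmap A11 B1) (Kmap_adj A11 B1)
    (Ktmap_inj hc) R
  refine ⟨M, fun z u ν h => ?_⟩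
  set X := P₁.mulVec z + P₂.mulVec y2s with hX
  set w : EuclideanSpace ℝ (Fin k ⊕ Fin m) :=
    (WithLp.equiv 2 ((Fin k ⊕ Fin m) → ℝ)).symm (Sum.elim z u) with hw
  set νE : EuclideanSpace ℝ (Fin k) := (WithLp.equiv 2 (Fin k → ℝ)).symm ν with hνE
  have h1 : ‖w‖ ^ 2 = vnorm z ^ 2 + vnorm u ^ 2 := by
    rw [enorm_sq, Fintype.sum_sum_type, vnorm_sq, vnorm_sq]
    rfl
  have h2 : ‖νE‖ ^ 2 = vnorm ν ^ 2 := by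
    rw [enorm_sq, vnorm_sq]
    rfl
  have h3 : ‖Gmap f P₁ P₂ y2s w + Ktmap A11 B1 νE‖ ^ 2
      = vnorm (P₁ᵀ.mulVec (gradX f X u) + A11ᵀ.mulVec ν) ^ 2
        + vnorm (gradU f X u + B1ᵀ.mulVec ν) ^ 2 := by
    rw [enorm_sq, Fintype.sum_sum_type, vnorm_sq, vnorm_sq]
    congr 1
    · refine Finset.sum_congr rfl fun i _ => ?_
      have hco : (Gmap f P₁ P₂ y2s w + Ktmap A11 B1 νE) (Sum.inl i)
          = P₁ᵀ.mulVec (gradX f X u) i + A11ᵀ.mulVec ν i := by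
        rw [PiLp.add_apply]
        congr 1
        exact pgradFtheta_inl f P₁ P₂ y2s hF0 z u i
      rw [hco]
      rfl
    · refine Finset.sum_congr rfl fun j _ => ?_
      have hco : (Gmap f P₁ P₂ y2s w + Ktmap A11 B1 νE) (Sum.inr j)
          = gradU f X u j + B1ᵀ.mulVec ν j := by
        rw [PiLp.add_apply]
        congr 1
        exact pgradFtheta_inr f P₁ P₂ y2s hF0 z u j
      rw [hco]
      rfl
  have h4 : ‖Kmap A11 B1 w‖ ^ 2 = vnorm (A11.mulVec z + B1.mulVec u) ^ 2 := by
    rw [enorm_sq, vnorm_sq]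
    rfl
  have hyp : M ≤ Real.sqrt (‖w‖ ^ 2 + ‖νE‖ ^ 2) := by
    rw [h1, h2]; exact h
  have hres := hM w νE hyp
  rwa [h3, h4] at hres

end Turnpike
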